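/- Let (A_1, A_2, …) be a sequence of d×d complex matrices such that P_n := A_1⋯A_n is nonzero for every n and P_n/‖P_n‖ converges to a matrix P as n → +∞ (where ‖M‖ := Σ_{i,j}|M(i,j)|). Then there exists a nonzero row vector L ∈ ℂ^{1×d} such that, for every d×d complex matrix A occurring infinitely many times in the sequence (i.e. with {n : A_n = A} infinite), L·A = ‖P·A‖·L; in other words, all matrices occurring infinitely many times in the sequence have a common left eigenvector. -/

import Mathlib

open Matrix Filter Finset Topology

/-- `blockProdC A m n = A (m+1) * ⋯ * A n` for complex matrices. -/
noncomputable def blockProdC {d : ℕ} (A : ℕ → Matrix (Fin d) (Fin d) ℂ) (m n : ℕ) :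
    Matrix (Fin d) (Fin d) ℂ :=
  ((List.range (n - m)).map fun i => A (m + 1 + i)).prod

/-- `‖M‖` : sum of the absolute values of the entries of a complex matrix. -/
noncomputable def matNormC {d : ℕ} (M : Matrix (Fin d) (Fin d) ℂ) : ℝ :=
  ∑ i, ∑ j, ‖M i j‖

lemma matNormC_nonneg {d : ℕ} (M : Matrix (Fin d) (Fin d) ℂ) : 0 ≤ matNormC M :=
  Finset.sum_nonneg fun _ _ => Finset.sum_nonneg fun _ _ => norm_nonneg _

lemma matNormC_eq_zero {d : ℕ} {M : Matrix (Fin d) (Fin d) ℂ} (h : matNormC M = 0) :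
    M = 0 := by
  ext i j
  have h1 := (Finset.sum_eq_zero_iff_of_nonneg
    (fun i _ => Finset.sum_nonneg fun j _ => norm_nonneg _)).mp h i (Finset.mem_univ i)
  have h2 := (Finset.sum_eq_zero_iff_of_nonneg
    (fun j _ => norm_nonneg _)).mp h1 j (Finset.mem_univ j)
  simpa using h2

lemma matNormC_pos {d : ℕ} {M : Matrix (Fin d) (Fin d) ℂ} (h : M ≠ 0) : 0 < matNormC M := by
  rcases lt_or_eq_of_le (matNormC_nonneg M) with h' | h'
  · exact h'
  · exact absurd (matNormC_eq_zero h'.symm) h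

lemma matNormC_smul {d : ℕ} (r : ℝ) (M : Matrix (Fin d) (Fin d) ℂ) :
    matNormC (r • M) = |r| * matNormC M := by
  simp [matNormC, Matrix.smul_apply, Complex.real_smul, norm_mul, Complex.norm_real, Real.norm_eq_abs,
    Finset.mul_sum]

lemma matNormC_continuous {d : ℕ} : Continuous (matNormC (d := d)) := by
  unfold matNormC
  exact continuous_finset_sum _ fun i _ => continuous_finset_sum _ fun j _ =>
    continuous_norm.comp ((continuous_apply j).comp (continuous_apply i))

lemma blockProdC_succ {d : ℕ} (A : ℕ → Matrix (Fin d) (Fin d) ℂ) (n : ℕ) :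
    blockProdC A 0 (n + 1) = blockProdC A 0 n * A (n + 1) := by
  unfold blockProdC
  simp [List.range_succ, Nat.add_comm]

/-- **Proposition 5.3.** If `P n / ‖P n‖` converges to `P`, then all the matrices
occurring infinitely many times in the sequence have a common left eigenvector: there
is a nonzero row vector `L` with `L · A = ‖P·A‖ · L` for each such `A`. -/
theorem common_left_eigenvector {d : ℕ} (A : ℕ → Matrix (Fin d) (Fin d) ℂ)
    (hP : ∀ n, 1 ≤ n → blockProdC A 0 n ≠ 0)
    (P : Matrix (Fin d) (Fin d) ℂ)
    (hconv : Tendsto (fun n => (matNormC (blockProdC A 0 n))⁻¹ • blockProdC A 0 n)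
      atTop (nhds P)) :
    ∃ L : Fin d → ℂ, L ≠ 0 ∧
      ∀ M : Matrix (Fin d) (Fin d) ℂ, {n : ℕ | 1 ≤ n ∧ A n = M}.Infinite →
        L ᵥ* M = matNormC (P * M) • L := by
  -- dispose of the degenerate case d = 0
  rcases Nat.eq_zero_or_pos d with hd | hd
  · exfalso
    apply hP 1 le_rfl
    subst hd
    ext i j
    exact i.elim0
  -- the normalized products
  set Q : ℕ → Matrix (Fin d) (Fin d) ℂ :=
    fun n => (matNormC (blockProdC A 0 n))⁻¹ • blockProdC A 0 n with hQ
  -- all partial products are nonzero (including the empty one)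
  have hP' : ∀ m, blockProdC A 0 m ≠ 0 := by
    intro m
    rcases Nat.eq_zero_or_pos m with rfl | hm
    · have h1 : blockProdC A 0 0 = 1 := by simp [blockProdC]
      rw [h1]
      intro h
      have := congrFun (congrFun h ⟨0, hd⟩) ⟨0, hd⟩
      simp [Matrix.one_apply] at this
    · exact hP m hm
  -- norms of Q n are 1
  have hnorm1 : ∀ n, matNormC (Q n) = 1 := by
    intro n
    have hpos := matNormC_pos (hP' n)
    simp only [hQ]
    rw [matNormC_smul, abs_of_pos (inv_pos.mpr hpos), inv_mul_cancel₀ (ne_of_gt hpos)]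
  -- matNormC P = 1
  have hPnorm : matNormC P = 1 := by
    have h1 : Tendsto (fun n => matNormC (Q n)) atTop (nhds (matNormC P)) :=
      (matNormC_continuous.tendsto P).comp hconv
    have h2 : Tendsto (fun n => matNormC (Q n)) atTop (nhds 1) := by
      have : (fun n => matNormC (Q n)) = fun _ => (1 : ℝ) := funext hnorm1
      rw [this]; exact tendsto_const_nhds
    exact tendsto_nhds_unique h1 h2
  have hP0 : P ≠ 0 := by
    intro h
    rw [h] at hPnorm
    simp [matNormC] at hPnorm
  -- the key identity
  have key : ∀ M : Matrix (Fin d) (Fin d) ℂ, {n : ℕ | 1 ≤ n ∧ A n = M}.Infinite →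
      P * M = matNormC (P * M) • P := by
    intro M hM
    by_cases hz : matNormC (P * M) = 0
    · rw [hz, zero_smul]
      exact matNormC_eq_zero hz
    · have hfreq : ∃ᶠ n in atTop, 1 ≤ n ∧ A n = M :=
        Nat.frequently_atTop_iff_infinite.mpr hM
      obtain ⟨φ, hφmono, hφ⟩ := Filter.extraction_of_frequently_atTop hfreq
      have hψ : Tendsto (fun k => φ k - 1) atTop atTop :=
        (tendsto_sub_atTop_nat 1).comp hφmono.tendsto_atTop
      have h1 : Tendsto (fun k => Q (φ k - 1)) atTop (nhds P) := hconv.comp hψ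
      have h2 : Tendsto (fun k => Q (φ k)) atTop (nhds P) := hconv.comp hφmono.tendsto_atTop
      -- the recurrence
      have hrec : ∀ k, Q (φ k) =
          (matNormC (Q (φ k - 1) * M))⁻¹ • (Q (φ k - 1) * M) := by
        intro k
        obtain ⟨hk1, hkA⟩ := hφ k
        have hsub : φ k - 1 + 1 = φ k := Nat.succ_pred_eq_of_pos hk1
        have hB : blockProdC A 0 (φ k) = blockProdC A 0 (φ k - 1) * M := by
          conv_lhs => rw [← hsub, blockProdC_succ]
          rw [hsub, hkA]
        set B := blockProdC A 0 (φ k - 1) with hBdef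
        have hBpos : 0 < matNormC B := matNormC_pos (hP' _)
        have hBM : B * M ≠ 0 := by rw [← hB]; exact hP' (φ k)
        have hBMpos : 0 < matNormC (B * M) := matNormC_pos hBM
        have e1 : Q (φ k - 1) * M = (matNormC B)⁻¹ • (B * M) := by
          simp only [hQ, ← hBdef, Matrix.smul_mul]
        have e2 : matNormC (Q (φ k - 1) * M) = (matNormC B)⁻¹ * matNormC (B * M) := by
          rw [e1, matNormC_smul, abs_of_pos (inv_pos.mpr hBpos)]
        calc Q (φ k) = (matNormC (B * M))⁻¹ • (B * M) := by
              simp only [hQ]; rw [hB]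
          _ = (matNormC (Q (φ k - 1) * M))⁻¹ • (Q (φ k - 1) * M) := by
              rw [e2, e1, smul_smul, mul_inv, inv_inv]
              congr 1
              rw [mul_comm (matNormC B), mul_assoc, mul_inv_cancel₀ (ne_of_gt hBpos), mul_one]
      -- pass to the limit
      have h3 : Tendsto (fun k => Q (φ k - 1) * M) atTop (nhds (P * M)) :=
        ((continuous_id.matrix_mul continuous_const).tendsto P).comp h1
      have h4 : Tendsto (fun k => matNormC (Q (φ k - 1) * M)) atTop
          (nhds (matNormC (P * M))) := (matNormC_continuous.tendsto _).comp h3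
      have h5 : Tendsto (fun k => (matNormC (Q (φ k - 1) * M))⁻¹ • (Q (φ k - 1) * M))
          atTop (nhds ((matNormC (P * M))⁻¹ • (P * M))) := (h4.inv₀ hz).smul h3
      have huniq : P = (matNormC (P * M))⁻¹ • (P * M) :=
        tendsto_nhds_unique (h2.congr hrec) h5
      have hmul := congrArg (fun X => matNormC (P * M) • X) huniq
      simp only [smul_smul, mul_inv_cancel₀ hz, one_smul] at hmul
      exact hmul.symm
  -- pick a nonzero row of P
  obtain ⟨i, hi⟩ : ∃ i, P i ≠ 0 := by
    by_contra h
    push_neg at h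
    apply hP0
    ext i j
    have := congrFun (h i) j
    simpa using this
  refine ⟨P i, hi, ?_⟩
  intro M hM
  have hkey := key M hM
  funext j
  have h1 : (P i ᵥ* M) j = (P * M) i j := by
    simp [Matrix.vecMul, Matrix.mul_apply, dotProduct]
  rw [h1]
  conv_lhs => rw [hkey]
  rfl
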